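/- For λ ∈ Γ_k with H_k = 1, one has σ_{k−1}(λ) ≥ C(n, k−1); that is, H_{k−1} ≥ H_k^{(k−1)/k} = 1. -/

import Mathlib

open Matrix Finset Real MeasureTheory

/-- Partial derivative of `f` in the `i`-th coordinate direction at `x`. -/
noncomputable def pd {n : ℕ} (f : (Fin n → ℝ) → ℝ) (i : Fin n) (x : Fin n → ℝ) : ℝ :=
  fderiv ℝ f x (Pi.single i 1)

/-- Squared Euclidean norm of the gradient `|Du|²`. -/
noncomputable def gradSq {n : ℕ} (u : (Fin n → ℝ) → ℝ) (x : Fin n → ℝ) : ℝ :=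
  ∑ i, (pd u i x) ^ 2

/-- The shape operator `h_i^j = ∂/∂x_i (u_j / √(1 - |Du|²))` of the spacelike graph of `u`. -/
noncomputable def Aop {n : ℕ} (u : (Fin n → ℝ) → ℝ) (x : Fin n → ℝ) :
    Matrix (Fin n) (Fin n) ℝ :=
  Matrix.of fun i j => pd (fun y => pd u j y / Real.sqrt (1 - gradSq u y)) i x

/-- `σ_k(A)`: the `k`-th elementary symmetric function of the eigenvalues of `A`,
read off from the characteristic polynomial. -/
noncomputable def msigma (n k : ℕ) (A : Matrix (Fin n) (Fin n) ℝ) : ℝ :=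
  if k ≤ n then (-1 : ℝ) ^ k * (Matrix.charpoly A).coeff (n - k) else 0

/-- The Newton tensor `(σ_k(A))^i_j = ∂σ_k(A)/∂A^j_i`. -/
noncomputable def newton (n k : ℕ) (A : Matrix (Fin n) (Fin n) ℝ) :
    Matrix (Fin n) (Fin n) ℝ :=
  Matrix.of fun i j =>
    deriv (fun t : ℝ => msigma n k (A + t • Matrix.single j i 1)) 0

/-- `σ_k(λ)` for `λ ∈ ℝⁿ`. -/
noncomputable def esymm (n k : ℕ) (lam : Fin n → ℝ) : ℝ :=
  ∑ s ∈ Finset.powersetCard k Finset.univ, ∏ i ∈ s, lam i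

/-- The Gårding cone `Γ_k`. -/
def GammaK (n k : ℕ) : Set (Fin n → ℝ) :=
  {lam | ∀ i, 1 ≤ i → i ≤ k → 0 < esymm n i lam}

/-- The Minkowski scalar product on `ℝ^{n,1}`. -/
noncomputable def mink (n : ℕ) (Y Z : Fin (n + 1) → ℝ) : ℝ :=
  (∑ i : Fin n, Y i.castSucc * Z i.castSucc) - Y (Fin.last n) * Z (Fin.last n)

/-- The graph map `X(x) = (x, u(x))`. -/
noncomputable def Xg {n : ℕ} (u : (Fin n → ℝ) → ℝ) (z : Fin n → ℝ) : Fin (n + 1) → ℝ :=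
  Fin.snoc z (u z)

/-- The timelike unit normal `N = (Du, 1)/√(1 - |Du|²)` of the graph of `u`. -/
noncomputable def Nvec {n : ℕ} (u : (Fin n → ℝ) → ℝ) (x : Fin n → ℝ) : Fin (n + 1) → ℝ :=
  fun j => (Fin.snoc (fun i => pd u i x) 1 : Fin (n + 1) → ℝ) j / Real.sqrt (1 - gradSq u x)


private lemma sum_pc_one {ι : Type*} (s : Finset ι) (g : ι → ℝ) :
    ∑ t ∈ Finset.powersetCard 1 s, ∏ i ∈ t, g i = ∑ i ∈ s, g i := by
  rw [Finset.powersetCard_one, Finset.sum_map]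
  simp

private lemma sum_pc_two {ι : Type*} [DecidableEq ι] (s : Finset ι) (g : ι → ℝ) :
    2 * ∑ t ∈ Finset.powersetCard 2 s, ∏ i ∈ t, g i
      = (∑ i ∈ s, g i) ^ 2 - ∑ i ∈ s, g i ^ 2 := by
  induction s using Finset.induction_on with
  | empty =>
    rw [Finset.powersetCard_eq_empty.2 (by simp)]; simp
  | @insert a s ha ih =>
    rw [show (2:ℕ) = Nat.succ 1 from rfl, Finset.powersetCard_succ_insert ha]
    rw [Finset.sum_union]
    · rw [Finset.sum_image (fun t₁ h₁ t₂ h₂ h => ?_)]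
      · have hins : ∀ t ∈ Finset.powersetCard 1 s, ∏ i ∈ insert a t, g i = g a * ∏ i ∈ t, g i := by
          intro t ht
          rw [Finset.mem_powersetCard] at ht
          exact Finset.prod_insert (fun hat => ha (ht.1 hat))
        rw [Finset.sum_congr rfl hins, ← Finset.mul_sum, sum_pc_one,
          Finset.sum_insert ha, Finset.sum_insert ha]
        ring_nf
        ring_nf at ih
        linarith [ih]
      · rw [Finset.mem_coe, Finset.mem_powersetCard] at h₁ h₂
        have h1 : a ∉ t₁ := fun hat => ha (h₁.1 hat)
        have h2 : a ∉ t₂ := fun hat => ha (h₂.1 hat)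
        rw [← Finset.erase_insert h1, ← Finset.erase_insert h2, h]
    · rw [Finset.disjoint_left]
      intro t ht hti
      rw [Finset.mem_powersetCard] at ht
      rw [Finset.mem_image] at hti
      obtain ⟨u, hu, rfl⟩ := hti
      exact ha (ht.1 (Finset.mem_insert_self a u))

private lemma sum_pc_compl {m k : ℕ} (hk : k ≤ m) (f : Fin m → ℝ) :
    ∑ t ∈ Finset.powersetCard (m - k) (Finset.univ : Finset (Fin m)), ∏ i ∈ t, f i
      = ∑ t ∈ Finset.powersetCard k (Finset.univ : Finset (Fin m)), ∏ i ∈ tᶜ, f i := by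
  refine Finset.sum_nbij' (fun t => tᶜ) (fun t => tᶜ) ?_ ?_ ?_ ?_ ?_
  · intro t ht
    rw [Finset.mem_powersetCard_univ] at ht ⊢
    rw [Finset.card_compl, ht, Fintype.card_fin]
    omega
  · intro t ht
    rw [Finset.mem_powersetCard_univ] at ht ⊢
    rw [Finset.card_compl, ht, Fintype.card_fin]
  · intro t _; exact compl_compl t
  · intro t _; exact compl_compl t
  · intro t _; rw [compl_compl]

private lemma choose_two_real {m : ℕ} (hm : 2 ≤ m) :
    (m.choose 2 : ℝ) * 2 = m * ((m : ℝ) - 1) := by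
  have h2 : 2 ∣ m * (m - 1) := by
    have := Nat.even_mul_succ_self (m - 1)
    have hh : (m - 1) * (m - 1 + 1) = m * (m - 1) := by
      have h1 : m - 1 + 1 = m := by omega
      rw [h1]; ring
    rw [hh] at this
    exact this.two_dvd
  have : m.choose 2 * 2 = m * (m - 1) := by
    rw [Nat.choose_two_right, Nat.div_mul_cancel h2]
  have := congrArg (fun x : ℕ => (x : ℝ)) this
  push_cast [Nat.cast_sub (by omega : 1 ≤ m)] at this
  linarith [this]

private lemma newton_base {m : ℕ} (hm : 2 ≤ m) (f : Fin m → ℝ) :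
    (m : ℝ) ^ 2 * ((∑ t ∈ Finset.powersetCard (m - 2) (Finset.univ : Finset (Fin m)), ∏ i ∈ t, f i)
        * (∑ t ∈ Finset.powersetCard m (Finset.univ : Finset (Fin m)), ∏ i ∈ t, f i))
      ≤ (m.choose 2 : ℝ) *
        (∑ t ∈ Finset.powersetCard (m - 1) (Finset.univ : Finset (Fin m)), ∏ i ∈ t, f i) ^ 2 := by
  set p : Fin m → ℝ := fun i => ∏ j ∈ Finset.univ.erase i, f j with hp
  have huniv : (Finset.univ : Finset (Fin m)).card = m := by simp
  have hEm : ∑ t ∈ Finset.powersetCard m (Finset.univ : Finset (Fin m)), ∏ i ∈ t, f i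
      = ∏ i, f i := by
    have hself : Finset.powersetCard m (Finset.univ : Finset (Fin m)) = {Finset.univ} := by
      ext t
      rw [Finset.mem_powersetCard_univ, Finset.mem_singleton,
        ← Finset.card_eq_iff_eq_univ, Fintype.card_fin]
    rw [hself, Finset.sum_singleton]
  have hEm1 : ∑ t ∈ Finset.powersetCard (m - 1) (Finset.univ : Finset (Fin m)), ∏ i ∈ t, f i
      = ∑ i, p i := by
    rw [sum_pc_compl (by omega) f, Finset.powersetCard_one, Finset.sum_map]
    apply Finset.sum_congr rfl
    intro i _
    simp only [Function.Embedding.coeFn_mk]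
    rw [Finset.compl_singleton]
  have hpair : (∑ t ∈ Finset.powersetCard (m - 2) (Finset.univ : Finset (Fin m)), ∏ i ∈ t, f i)
        * (∑ t ∈ Finset.powersetCard m (Finset.univ : Finset (Fin m)), ∏ i ∈ t, f i)
      = ∑ t ∈ Finset.powersetCard 2 (Finset.univ : Finset (Fin m)), ∏ i ∈ t, p i := by
    rw [hEm, sum_pc_compl (by omega) f, Finset.sum_mul]
    apply Finset.sum_congr rfl
    intro t ht
    rw [Finset.mem_powersetCard_univ] at ht
    obtain ⟨x, y, hxy, rfl⟩ := Finset.card_eq_two.1 ht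
    have hcompl : ({x, y} : Finset (Fin m))ᶜ = (Finset.univ.erase x).erase y := by
      rw [show ({x, y} : Finset (Fin m)) = insert x {y} from rfl, Finset.compl_insert,
        Finset.compl_singleton, Finset.erase_right_comm]
    have hpx : p x = f y * ∏ j ∈ ({x, y} : Finset (Fin m))ᶜ, f j := by
      rw [hp, hcompl, Finset.mul_prod_erase _ _ (Finset.mem_erase.2 ⟨hxy.symm, Finset.mem_univ y⟩)]
    have hpy : p y = f x * ∏ j ∈ ({x, y} : Finset (Fin m))ᶜ, f j := by
      have hcompl' : ({x, y} : Finset (Fin m))ᶜ = (Finset.univ.erase y).erase x := by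
        rw [hcompl, Finset.erase_right_comm]
      rw [hp, hcompl', Finset.mul_prod_erase _ _ (Finset.mem_erase.2 ⟨hxy, Finset.mem_univ x⟩)]
    have hprod : ∏ i, f i = f x * (f y * ∏ j ∈ ({x, y} : Finset (Fin m))ᶜ, f j) := by
      rw [← hpx, hp, Finset.mul_prod_erase _ _ (Finset.mem_univ x)]
    rw [Finset.prod_pair hxy, hpx, hpy, hprod]
    ring
  rw [hpair, hEm1]
  have hid := sum_pc_two (Finset.univ : Finset (Fin m)) p
  have hcs : (∑ i, p i) ^ 2 ≤ (m : ℝ) * ∑ i, p i ^ 2 := by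
    have := sq_sum_le_card_mul_sum_sq (s := (Finset.univ : Finset (Fin m))) (f := p)
    rwa [huniv] at this
  have hch := choose_two_real hm
  have hmr : (2 : ℝ) ≤ m := by exact_mod_cast hm
  nlinarith [mul_le_mul_of_nonneg_left hcs (by positivity : (0:ℝ) ≤ (m:ℝ)),
    sq_nonneg (∑ i, p i)]

open Polynomial in
private lemma deriv_step (s : Multiset ℝ) (hs : 1 ≤ Multiset.card s) :
    ∃ t : Multiset ℝ, Multiset.card t = Multiset.card s - 1 ∧
      ∀ i : ℕ, i ≤ Multiset.card s - 1 →
        (Multiset.card s : ℝ) * t.esymm i = ((Multiset.card s : ℝ) - i) * s.esymm i := by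
  set m := Multiset.card s with hm
  set P := (s.map fun a => X - C a).prod with hPdef
  have hPdeg : P.natDegree = m := natDegree_multiset_prod_X_sub_C_eq_card s
  have hProots : P.roots = s := roots_multiset_prod_X_sub_C s
  have hPmonic : P.Monic := monic_multiset_prod_of_monic _ _ fun a _ => monic_X_sub_C a
  have hPm : P.coeff m = 1 := by
    have := hPmonic.coeff_natDegree
    rwa [hPdeg] at this
  have hlc : (derivative P).coeff (m - 1) = m := by
    rw [coeff_derivative]
    have h1 : m - 1 + 1 = m := by omega
    rw [h1, hPm, one_mul]
    push_cast [Nat.cast_sub hs]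
    ring
  have hmne : ((m : ℝ)) ≠ 0 := by positivity
  have hne : (derivative P).coeff (m-1) ≠ 0 := by rw [hlc]; exact hmne
  have hdeg' : (derivative P).natDegree = m - 1 := by
    refine le_antisymm ?_ (le_natDegree_of_ne_zero hne)
    have := natDegree_derivative_le P
    omega
  have hlc' : (derivative P).leadingCoeff = m := by
    rw [Polynomial.leadingCoeff, hdeg', hlc]
  have hcard : Multiset.card (derivative P).roots = m - 1 := by
    have h1 : Multiset.card (derivative P).roots ≤ m - 1 := by
      have := (derivative P).card_roots'
      omega
    have h2 := P.card_roots_le_derivative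
    rw [hProots] at h2
    omega
  refine ⟨(derivative P).roots, hcard, ?_⟩
  intro i hi
  have key := Polynomial.C_leadingCoeff_mul_prod_multiset_X_sub_C
    (p := derivative P) (hcard.trans hdeg'.symm)
  -- LHS coefficient computation
  have hL : (derivative P).coeff (m - 1 - i)
      = ((-1 : ℝ)) ^ i * (((m : ℝ) - i) * s.esymm i) := by
    rw [coeff_derivative]
    have h1 : m - 1 - i + 1 = m - i := by omega
    rw [h1]
    have h2 : m - i ≤ Multiset.card s := by omega
    rw [Multiset.prod_X_sub_C_coeff s h2]
    have h3 : Multiset.card s - (m - i) = i := by omega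
    rw [h3]
    have h4 : ((m - 1 - i : ℕ) : ℝ) + 1 = (m : ℝ) - i := by
      rw [Nat.cast_sub (by omega : i ≤ m - 1), Nat.cast_sub hs]
      push_cast; ring
    rw [h4]; ring
  have hR : (derivative P).coeff (m - 1 - i)
      = ((-1 : ℝ)) ^ i * ((m : ℝ) * ((derivative P).roots.esymm i)) := by
    conv_lhs => rw [← key]
    rw [coeff_C_mul, hlc']
    have h2 : m - 1 - i ≤ Multiset.card (derivative P).roots := by omega
    rw [Multiset.prod_X_sub_C_coeff _ h2]
    have h3 : Multiset.card (derivative P).roots - (m - 1 - i) = i := by omega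
    rw [h3]
    ring
  have := hL.symm.trans hR
  have hcancel := mul_left_cancel₀ (pow_ne_zero i (by norm_num : (-1 : ℝ) ≠ 0)) this
  linarith [hcancel]

private lemma choose_id {m : ℕ} (i : ℕ) (hm : 1 ≤ m) :
    (m - i) * m.choose i = m * (m - 1).choose i := by
  obtain ⟨n, rfl⟩ : ∃ n, m = n + 1 := ⟨m - 1, by omega⟩
  have h1 := Nat.choose_succ_right_eq (n + 1) i
  have h2 := Nat.add_one_mul_choose_eq n i
  rw [Nat.add_sub_cancel]
  rw [h2, h1]; ring

private lemma exists_fin_rep (s : Multiset ℝ) :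
    ∃ f : Fin (Multiset.card s) → ℝ, Multiset.map f Finset.univ.val = s := by
  have hlen : s.toList.length = Multiset.card s := Multiset.length_toList s
  refine ⟨fun i => s.toList.get (Fin.cast hlen.symm i), ?_⟩
  have h1 : (Finset.univ.val : Multiset (Fin (Multiset.card s))).map
      (fun i => s.toList.get (Fin.cast hlen.symm i))
      = ↑(List.ofFn (fun i => s.toList.get (Fin.cast hlen.symm i))) := by
    rw [List.ofFn_eq_map]
    rfl
  rw [h1]
  have h2 : List.ofFn (fun i : Fin (Multiset.card s) => s.toList.get (Fin.cast hlen.symm i))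
      = s.toList := by
    apply List.ext_getElem
    · simp [hlen]
    · intro n h₁ h₂
      simp [List.getElem_ofFn]
  rw [h2, Multiset.coe_toList]

private lemma esymm_rep {s : Multiset ℝ} {f : Fin (Multiset.card s) → ℝ}
    (hf : Multiset.map f Finset.univ.val = s) (k : ℕ) :
    s.esymm k = ∑ t ∈ Finset.powersetCard k (Finset.univ : Finset (Fin (Multiset.card s))),
      ∏ i ∈ t, f i := by
  conv_lhs => rw [← hf]
  exact Finset.esymm_map_val f Finset.univ k

private lemma newton_multiset : ∀ (m : ℕ) (s : Multiset ℝ), Multiset.card s = m →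
    ∀ j : ℕ, 1 ≤ j → j + 1 ≤ m →
    s.esymm (j - 1) / (m.choose (j - 1)) * (s.esymm (j + 1) / (m.choose (j + 1)))
      ≤ (s.esymm j / (m.choose j)) ^ 2 := by
  intro m
  induction m using Nat.strong_induction_on with
  | _ m IH =>
  intro s hcard j hj hjm
  rcases eq_or_lt_of_le hjm with heq | hlt
  · -- base case : m = j + 1
    subst hcard
    obtain ⟨f, hf⟩ := exists_fin_rep s
    have hm2 : 2 ≤ Multiset.card s := by omega
    have hj1 : j - 1 = Multiset.card s - 2 := by omega
    have hjj : j = Multiset.card s - 1 := by omega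
    have hjp : j + 1 = Multiset.card s := heq
    have hbase := newton_base (m := Multiset.card s) hm2 f
    simp only [esymm_rep hf]
    rw [hj1, hjp, hjj]
    have hc1 : (Multiset.card s).choose (Multiset.card s - 2) = (Multiset.card s).choose 2 := by
      rw [show Multiset.card s - 2 = Multiset.card s - 2 from rfl, Nat.choose_symm (by omega)]
    have hc2 : (Multiset.card s).choose (Multiset.card s) = 1 := Nat.choose_self _
    have hc3 : (Multiset.card s).choose (Multiset.card s - 1) = Multiset.card s := by
      rw [Nat.choose_symm (by omega : 1 ≤ Multiset.card s), Nat.choose_one_right]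
    rw [hc1, hc2, hc3]
    rw [div_pow, div_mul_div_comm, Nat.cast_one, mul_one]
    rw [div_le_div_iff₀ (by exact_mod_cast Nat.choose_pos (by omega : 2 ≤ Multiset.card s))
      (by positivity)]
    linarith [hbase]
  · -- inductive step : j + 1 < m
    have hm1 : 1 ≤ Multiset.card s := by omega
    obtain ⟨t, htc, hte⟩ := deriv_step s hm1
    have htcm : Multiset.card t = m - 1 := by omega
    have hIH := IH (m - 1) (by omega) t htcm j hj (by omega)
    have hratio : ∀ i : ℕ, i ≤ m - 1 →
        t.esymm i / ((m - 1).choose i : ℝ) = s.esymm i / (m.choose i : ℝ) := by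
      intro i hi
      have h := hte i (by omega)
      rw [hcard] at h
      have hcid := choose_id i (by omega : 1 ≤ m)
      have hcidr : ((m : ℝ) - i) * (m.choose i : ℝ) = (m : ℝ) * ((m - 1).choose i : ℝ) := by
        have := congrArg (fun x : ℕ => (x : ℝ)) hcid
        push_cast [Nat.cast_sub (by omega : i ≤ m)] at this
        linarith [this]
      have hcp : (0 : ℝ) < (m.choose i : ℝ) := by
        exact_mod_cast Nat.choose_pos (by omega : i ≤ m)
      have hcp' : (0 : ℝ) < ((m - 1).choose i : ℝ) := by
        exact_mod_cast Nat.choose_pos (by omega : i ≤ m - 1)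
      rw [div_eq_div_iff hcp'.ne' hcp.ne']
      have hmne : (m : ℝ) ≠ 0 := Nat.cast_ne_zero.2 (by omega)
      have key : (m : ℝ) * (t.esymm i * (m.choose i : ℝ))
          = (m : ℝ) * (s.esymm i * ((m - 1).choose i : ℝ)) := by
        calc (m : ℝ) * (t.esymm i * (m.choose i : ℝ))
            = ((m : ℝ) * t.esymm i) * (m.choose i : ℝ) := by ring
          _ = (((m : ℝ) - i) * s.esymm i) * (m.choose i : ℝ) := by rw [h]
          _ = s.esymm i * (((m : ℝ) - i) * (m.choose i : ℝ)) := by ring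
          _ = s.esymm i * ((m : ℝ) * ((m - 1).choose i : ℝ)) := by rw [hcidr]
          _ = (m : ℝ) * (s.esymm i * ((m - 1).choose i : ℝ)) := by ring
      exact mul_left_cancel₀ hmne key
    rw [← hratio (j - 1) (by omega), ← hratio j (by omega), ← hratio (j + 1) (by omega)]
    exact hIH

/-- on `Γ_k` with `H_k = 1` one has `σ_{k-1} ≥ C(n,k-1)`. -/
theorem sigma_km1_ge {n k : ℕ} (hk1 : 1 ≤ k) (hk : k ≤ n)
    (lam : Fin n → ℝ) (hlam : lam ∈ GammaK n k)
    (hHk : esymm n k lam = n.choose k) :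
    esymm n (k - 1) lam ≥ n.choose (k - 1) := by
  have hbridge : ∀ i : ℕ, (Multiset.map lam Finset.univ.val).esymm i = esymm n i lam := by
    intro i
    rw [show Multiset.map lam Finset.univ.val = Finset.univ.val.map lam from rfl,
      Finset.esymm_map_val]
    rfl
  have hcard : Multiset.card (Multiset.map lam Finset.univ.val) = n := by simp
  set H : ℕ → ℝ := fun i => esymm n i lam / (n.choose i) with hH
  have hE0 : esymm n 0 lam = 1 := by
    simp [esymm]
  have hH0 : H 0 = 1 := by simp [hH, hE0]
  have hHpos : ∀ i, i ≤ k → 0 < H i := by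
    intro i hik
    rcases Nat.eq_zero_or_pos i with rfl | hi
    · rw [hH0]; norm_num
    · exact div_pos (hlam i hi hik)
        (by exact_mod_cast Nat.choose_pos (le_trans hik hk))
  have hHk1 : H k = 1 := by
    rw [hH]
    simp only
    rw [hHk, div_self (by exact_mod_cast Nat.choose_pos hk : (0:ℝ) < (n.choose k : ℝ)).ne']
  have hnewton : ∀ j : ℕ, 1 ≤ j → j + 1 ≤ n → H (j - 1) * H (j + 1) ≤ H j ^ 2 := by
    intro j h1 h2
    have := newton_multiset n (Multiset.map lam Finset.univ.val) hcard j h1 h2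
    simp only [hbridge] at this
    exact this
  have chain : ∀ i : ℕ, i ≤ k - 1 → H (i + 1) ^ i ≤ H i ^ (i + 1) := by
    intro i
    induction i with
    | zero => intro _; simp [hH0]
    | succ i ih =>
      intro hik
      have prev := ih (by omega)
      have hnew := hnewton (i + 1) (by omega) (by omega)
      have hidx1 : i + 1 - 1 = i := by omega
      rw [hidx1] at hnew
      have hp1 : 0 < H (i + 1) := hHpos (i + 1) (by omega)
      have hp2 : 0 < H (i + 2) := hHpos (i + 2) (by omega)
      have hp0 : 0 < H i := hHpos i (by omega)
      have h1 : H (i + 2) ^ (i + 1) * H i ^ (i + 1) ≤ (H (i + 1) ^ 2) ^ (i + 1) := by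
        rw [← mul_pow]
        exact pow_le_pow_left₀ (by positivity) (by linarith [hnew]) (i + 1)
      have h2 : H (i + 2) ^ (i + 1) * H (i + 1) ^ i ≤ H (i + 2) ^ (i + 1) * H i ^ (i + 1) :=
        mul_le_mul_of_nonneg_left prev (by positivity)
      have h3 : (H (i + 1) ^ 2) ^ (i + 1) = H (i + 1) ^ (i + 2) * H (i + 1) ^ i := by
        rw [← pow_add, ← pow_mul]; ring_nf
      have h4 : H (i + 2) ^ (i + 1) * H (i + 1) ^ i ≤ H (i + 1) ^ (i + 2) * H (i + 1) ^ i := by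
        rw [← h3]; linarith
      exact le_of_mul_le_mul_right h4 (pow_pos hp1 i)
  have hfin := chain (k - 1) le_rfl
  rw [show k - 1 + 1 = k from by omega] at hfin
  rw [hHk1, one_pow] at hfin
  have hk1' : 1 ≤ H (k - 1) := by
    have := (one_le_pow_iff_of_nonneg (hHpos (k - 1) (by omega)).le (by omega : k ≠ 0))
    exact this.1 (by simpa using hfin)
  have hcsub : (0:ℝ) < (n.choose (k - 1) : ℝ) := by
    exact_mod_cast Nat.choose_pos (by omega : k - 1 ≤ n)
  have : esymm n (k - 1) lam = H (k - 1) * (n.choose (k - 1) : ℝ) := by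
    rw [hH]; field_simp
  rw [ge_iff_le, this]
  nlinarith [hk1', hcsub]
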